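/- Let η be a dimer covering of ℤ², k an integer, c a choice function, and T the shuffling map acting at time k with choice function c. Then for every face f that is even at time k, h_{T(η)}(f) − h_η(f) = ( H[η] + H[T(η)] − V[η] − V[T(η)] ) / 4, where for a dimer covering ξ, H[ξ] is the number of edges among the top and bottom boundary edges of f that are occupied by dimers of ξ, and V[ξ] is the number of edges among the left and right boundary edges of f occupied by dimers of ξ. -/
import Mathlib


/-- Vertices of the square lattice `ℤ²`. -/
abbrev Vtx := ℤ × ℤ

/-- An edge of `ℤ²`, encoded as its base vertex together with a direction:
`true` for the horizontal edge to `(+1,0)`, `false` for the vertical edge to `(0,+1)`. -/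
abbrev DEdge := Vtx × Bool

/-- The displacement of an edge of given direction. -/
def edir (b : Bool) : Vtx := if b then (1, 0) else (0, 1)

/-- A dimer covering (perfect matching) of `ℤ²`: every vertex belongs to exactly one edge. -/
def IsDimerCover (η : Set DEdge) : Prop :=
  ∀ v : Vtx, ∃! e : DEdge, e ∈ η ∧ (v = e.1 ∨ v = e.1 + edir e.2)

/-- The indicator `1_{e ∈ η}` as a real number. -/
noncomputable def dInd (η : Set DEdge) (e : DEdge) : ℝ :=
  Set.indicator η (fun _ => (1 : ℝ)) e

/-- `+1` if `m + k` is even, `-1` otherwise: at time `k` a vertex `(x₁,x₂)` is white iff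
`x₁ + x₂ + k` is even (the colors of the vertices are interchanged at each time step). -/
def sgnW (k m : ℤ) : ℝ := if (m + k) % 2 = 0 then 1 else -1

/-- Adjacency of faces: the face `g` is one of the four nearest neighbors of `f`. -/
def Adj (f g : ℤ × ℤ) : Prop :=
  g = (f.1 + 1, f.2) ∨ g = (f.1 - 1, f.2) ∨ g = (f.1, f.2 + 1) ∨ g = (f.1, f.2 - 1)

/-- The height increment `σ_e (1_{e∈η} − 1/4)` when stepping from face `f` to an adjacent
face `g` across their shared edge `e`, with the coloring at time `k`: `σ_e = +1` iff the
endpoint of `e` which is white at time `k` lies to the right of the direction of crossing. -/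
noncomputable def inc (k : ℤ) (η : Set DEdge) (f g : ℤ × ℤ) : ℝ :=
  if g = (f.1 + 1, f.2) then
    sgnW k (f.1 + 1 + f.2) * (dInd η ((f.1 + 1, f.2), false) - 1 / 4)
  else if g = (f.1 - 1, f.2) then
    sgnW k (f.1 + f.2 + 1) * (dInd η ((f.1, f.2), false) - 1 / 4)
  else if g = (f.1, f.2 + 1) then
    sgnW k (f.1 + f.2) * (dInd η ((f.1, f.2 + 1), true) - 1 / 4)
  else if g = (f.1, f.2 - 1) then
    sgnW k (f.1 + f.2) * (dInd η ((f.1, f.2), true) - 1 / 4)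
  else 0

/-- `h` is a height function for the dimer covering `η` at time `k`. -/
def IsHeightAt (k : ℤ) (η : Set DEdge) (h : ℤ × ℤ → ℝ) : Prop :=
  ∀ f g : ℤ × ℤ, Adj f g → h g - h f = inc k η f g

/-- Bottom edge of the face `f = (i,j)`. -/
def bE (f : ℤ × ℤ) : DEdge := ((f.1, f.2), true)
/-- Top edge of the face `f`. -/
def tE (f : ℤ × ℤ) : DEdge := ((f.1, f.2 + 1), true)
/-- Left edge of the face `f`. -/
def lE (f : ℤ × ℤ) : DEdge := ((f.1, f.2), false)
/-- Right edge of the face `f`. -/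
def rE (f : ℤ × ℤ) : DEdge := ((f.1 + 1, f.2), false)

/-- The four boundary edges of the face `f`. -/
def bdF (f : ℤ × ℤ) : Set DEdge := {bE f, tE f, lE f, rE f}

/-- The edge opposite to `e` on the boundary of the face `f`. -/
def oppE (f : ℤ × ℤ) (e : DEdge) : DEdge :=
  if e = bE f then tE f else if e = tE f then bE f else if e = lE f then rE f else lE f

/-- The face `f = (i,j)` is even at time `k` iff `i + j ≡ k (mod 2)`. -/
def IsEvenFace (k : ℤ) (f : ℤ × ℤ) : Prop := (f.1 + f.2) % 2 = k % 2

/-- The shuffling map acting at time `k` with choice function `c` (deletion, sliding and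
creation steps). -/
def shuffle (k : ℤ) (c : ℤ × ℤ → Bool) (η : Set DEdge) : Set DEdge :=
  { e | ∃ f : ℤ × ℤ, IsEvenFace k f ∧ e ∈ bdF f ∧
      ((η ∩ bdF f = ∅ ∧
          (if c f then e = tE f ∨ e = bE f else e = lE f ∨ e = rE f)) ∨
        (∃ e₀ : DEdge, η ∩ bdF f = {e₀} ∧ e = oppE f e₀)) }

/-- `H[ξ]` at the face `f`: number of dimers of `ξ` among the top and bottom boundary
edges of `f`. -/
noncomputable def Hcount (ξ : Set DEdge) (f : ℤ × ℤ) : ℝ := dInd ξ (tE f) + dInd ξ (bE f)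

/-- `V[ξ]` at the face `f`: number of dimers of `ξ` among the left and right boundary
edges of `f`. -/
noncomputable def Vcount (ξ : Set DEdge) (f : ℤ × ℤ) : ℝ := dInd ξ (lE f) + dInd ξ (rE f)

lemma bE_ne_tE (f : ℤ × ℤ) : bE f ≠ tE f := by
  intro h
  have h2 : f.2 = f.2 + 1 := congrArg (fun e : DEdge => e.1.2) h
  omega

lemma bE_ne_lE (f : ℤ × ℤ) : bE f ≠ lE f := by
  intro h
  exact Bool.noConfusion (congrArg (fun e : DEdge => e.2) h)

lemma bE_ne_rE (f : ℤ × ℤ) : bE f ≠ rE f := by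
  intro h
  exact Bool.noConfusion (congrArg (fun e : DEdge => e.2) h)

lemma tE_ne_lE (f : ℤ × ℤ) : tE f ≠ lE f := by
  intro h
  exact Bool.noConfusion (congrArg (fun e : DEdge => e.2) h)

lemma tE_ne_rE (f : ℤ × ℤ) : tE f ≠ rE f := by
  intro h
  exact Bool.noConfusion (congrArg (fun e : DEdge => e.2) h)

lemma lE_ne_rE (f : ℤ × ℤ) : lE f ≠ rE f := by
  intro h
  have h2 : f.1 = f.1 + 1 := congrArg (fun e : DEdge => e.1.1) h
  omega

lemma oppE_bE (f : ℤ × ℤ) : oppE f (bE f) = tE f := by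
  unfold oppE; rw [if_pos rfl]

lemma oppE_tE (f : ℤ × ℤ) : oppE f (tE f) = bE f := by
  unfold oppE; rw [if_neg (bE_ne_tE f).symm, if_pos rfl]

lemma oppE_lE (f : ℤ × ℤ) : oppE f (lE f) = rE f := by
  unfold oppE; rw [if_neg (bE_ne_lE f).symm, if_neg (tE_ne_lE f).symm, if_pos rfl]

lemma oppE_rE (f : ℤ × ℤ) : oppE f (rE f) = lE f := by
  unfold oppE; rw [if_neg (bE_ne_rE f).symm, if_neg (tE_ne_rE f).symm,
    if_neg (lE_ne_rE f).symm]

lemma dInd_one {η : Set DEdge} {e : DEdge} (h : e ∈ η) : dInd η e = 1 := by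
  simp [dInd, Set.indicator_of_mem h]

lemma dInd_zero {η : Set DEdge} {e : DEdge} (h : e ∉ η) : dInd η e = 0 := by
  simp [dInd, Set.indicator_of_notMem h]

lemma mem_shuffle_iff (k : ℤ) (c : ℤ × ℤ → Bool) (η : Set DEdge) (f : ℤ × ℤ)
    (hf : IsEvenFace k f) (e : DEdge) (he : e ∈ bdF f) :
    e ∈ shuffle k c η ↔
      ((η ∩ bdF f = ∅ ∧ (if c f then e = tE f ∨ e = bE f else e = lE f ∨ e = rE f)) ∨
        (∃ e₀ : DEdge, η ∩ bdF f = {e₀} ∧ e = oppE f e₀)) := by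
  constructor
  · rintro ⟨f', hf', he', hcond⟩
    have h1 : (f.1 + f.2) % 2 = k % 2 := hf
    have h2 : (f'.1 + f'.2) % 2 = k % 2 := hf'
    have hff : f' = f := by
      simp only [bdF, Set.mem_insert_iff, Set.mem_singleton_iff] at he he'
      rcases he with rfl | rfl | rfl | rfl <;> rcases he' with h' | h' | h' | h' <;>
        simp only [bE, tE, lE, rE, Prod.mk.injEq, Bool.true_eq_false, Bool.false_eq_true,
          and_false, false_and, and_true] at h' <;>
        (rw [Prod.ext_iff]; omega)
    rw [hff] at hcond
    exact hcond
  · intro hc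
    exact ⟨f, hf, he, hc⟩

/-- let `η` be a dimer covering, `T = shuffle k c`, `h` a height function of
`η` at time `k` and `h'` a height function of `T(η)` at time `k + 1` normalized by
`h' = h` at every face odd at time `k`.  Then at every face `f` even at time `k`,
`h'(f) − h(f) = (H[η] + H[T(η)] − V[η] − V[T(η)])/4`. -/
theorem stmt_16 (η : Set DEdge) (hη : IsDimerCover η) (k : ℤ) (c : ℤ × ℤ → Bool)
    (h h' : ℤ × ℤ → ℝ)
    (hh : IsHeightAt k η h) (hh' : IsHeightAt (k + 1) (shuffle k c η) h')
    (hnorm : ∀ g : ℤ × ℤ, ¬ IsEvenFace k g → h' g = h g) :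
    ∀ f : ℤ × ℤ, IsEvenFace k f →
      h' f - h f = (Hcount η f + Hcount (shuffle k c η) f
        - Vcount η f - Vcount (shuffle k c η) f) / 4 := by
  intro f hf
  have hfe : (f.1 + f.2) % 2 = k % 2 := hf
  set η' := shuffle k c η with hη'def
  -- boundary edge memberships
  have bdb : bE f ∈ bdF f := by simp [bdF]
  have bdt : tE f ∈ bdF f := by simp [bdF]
  have bdl : lE f ∈ bdF f := by simp [bdF]
  have bdr : rE f ∈ bdF f := by simp [bdF]
  -- step 1: h' f - h f = dInd η' (bE f) + dInd η (bE f) - 1/2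
  have hg : Adj (f.1, f.2 - 1) f := by
    right; right; left
    rw [Prod.ext_iff]
    constructor
    · rfl
    · show f.2 = f.2 - 1 + 1; omega
  have hodd : ¬ IsEvenFace k (f.1, f.2 - 1) := by
    intro hc
    have hc' : (f.1 + (f.2 - 1)) % 2 = k % 2 := hc
    omega
  have e1 := hh (f.1, f.2 - 1) f hg
  have e2 := hh' (f.1, f.2 - 1) f hg
  have hn := hnorm (f.1, f.2 - 1) hodd
  have hne1 : f ≠ ((f.1 : ℤ) + 1, f.2 - 1) := by
    intro hcon
    have : f.2 = f.2 - 1 := congrArg Prod.snd hcon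
    omega
  have hne2 : f ≠ ((f.1 : ℤ) - 1, f.2 - 1) := by
    intro hcon
    have : f.1 = f.1 - 1 := congrArg Prod.fst hcon
    omega
  have heq3 : f = ((f.1 : ℤ), f.2 - 1 + 1) := by
    rw [Prod.ext_iff]
    exact ⟨rfl, by omega⟩
  have hedge : (((f.1 : ℤ), f.2 - 1 + 1), true) = bE f := by
    have hz : f.2 - 1 + 1 = f.2 := by omega
    rw [hz]; rfl
  have hs1 : sgnW k (f.1 + (f.2 - 1)) = -1 := by
    unfold sgnW; rw [if_neg (by omega)]
  have hs2 : sgnW (k + 1) (f.1 + (f.2 - 1)) = 1 := by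
    unfold sgnW; rw [if_pos (by omega)]
  have e1' : h f - h (f.1, f.2 - 1) = -(dInd η (bE f) - 1 / 4) := by
    rw [e1]
    simp only [inc]
    rw [if_neg hne1, if_neg hne2, if_pos heq3, hedge, hs1]
    ring
  have e2' : h' f - h' (f.1, f.2 - 1) = dInd η' (bE f) - 1 / 4 := by
    rw [e2]
    simp only [inc]
    rw [if_neg hne1, if_neg hne2, if_pos heq3, hedge, hs2]
    ring
  have key : h' f - h f = dInd η' (bE f) + dInd η (bE f) - 1 / 2 := by
    linarith [e1', e2', hn]
  rw [key]
  -- matching constraints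
  have hbl : ¬(bE f ∈ η ∧ lE f ∈ η) := by
    rintro ⟨h1, h2⟩
    obtain ⟨e, -, hu⟩ := hη (f.1, f.2)
    have hb := hu (bE f) ⟨h1, Or.inl rfl⟩
    have hl := hu (lE f) ⟨h2, Or.inl rfl⟩
    exact bE_ne_lE f (hb.trans hl.symm)
  have hbr : ¬(bE f ∈ η ∧ rE f ∈ η) := by
    rintro ⟨h1, h2⟩
    obtain ⟨e, -, hu⟩ := hη (f.1 + 1, f.2)
    have hb := hu (bE f) ⟨h1, Or.inr (by simp [bE, edir, Prod.ext_iff])⟩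
    have hr := hu (rE f) ⟨h2, Or.inl rfl⟩
    exact bE_ne_rE f (hb.trans hr.symm)
  have htl : ¬(tE f ∈ η ∧ lE f ∈ η) := by
    rintro ⟨h1, h2⟩
    obtain ⟨e, -, hu⟩ := hη (f.1, f.2 + 1)
    have ht := hu (tE f) ⟨h1, Or.inl rfl⟩
    have hl := hu (lE f) ⟨h2, Or.inr (by simp [lE, edir, Prod.ext_iff])⟩
    exact tE_ne_lE f (ht.trans hl.symm)
  have htr : ¬(tE f ∈ η ∧ rE f ∈ η) := by
    rintro ⟨h1, h2⟩
    obtain ⟨e, -, hu⟩ := hη (f.1 + 1, f.2 + 1)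
    have ht := hu (tE f) ⟨h1, Or.inr (by simp [tE, edir, Prod.ext_iff])⟩
    have hr := hu (rE f) ⟨h2, Or.inr (by simp [rE, edir, Prod.ext_iff])⟩
    exact tE_ne_rE f (ht.trans hr.symm)
  by_cases hmb : bE f ∈ η <;> by_cases hmt : tE f ∈ η <;>
    by_cases hml : lE f ∈ η <;> by_cases hmr : rE f ∈ η
  · exact absurd ⟨hmb, hml⟩ hbl
  · exact absurd ⟨hmb, hml⟩ hbl
  · exact absurd ⟨hmb, hmr⟩ hbr
  · -- {bE, tE} : deletion, η' has no boundary edge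
    have hmem : ∀ e, e ∈ bdF f → e ∉ η' := by
      intro e he hcon
      rcases (mem_shuffle_iff k c η f hf e he).mp hcon with ⟨hemp, -⟩ | ⟨e₁, hs, -⟩
      · have h1 : bE f ∈ η ∩ bdF f := ⟨hmb, bdb⟩
        rw [hemp] at h1; exact h1
      · have h1 : bE f ∈ η ∩ bdF f := ⟨hmb, bdb⟩
        have h2 : tE f ∈ η ∩ bdF f := ⟨hmt, bdt⟩
        rw [hs] at h1 h2
        exact bE_ne_tE f ((Set.mem_singleton_iff.mp h1).trans
          (Set.mem_singleton_iff.mp h2).symm)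
    simp only [Hcount, Vcount, dInd_one hmb, dInd_one hmt, dInd_zero hml, dInd_zero hmr,
      dInd_zero (hmem _ bdb), dInd_zero (hmem _ bdt), dInd_zero (hmem _ bdl),
      dInd_zero (hmem _ bdr)]
    norm_num
  · exact absurd ⟨hmb, hml⟩ hbl
  · exact absurd ⟨hmb, hml⟩ hbl
  · exact absurd ⟨hmb, hmr⟩ hbr
  · -- {bE} : slides to tE
    have hset : η ∩ bdF f = {bE f} := by
      ext e
      simp only [Set.mem_inter_iff, Set.mem_singleton_iff]
      constructor
      · rintro ⟨heη, hbd⟩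
        simp only [bdF, Set.mem_insert_iff, Set.mem_singleton_iff] at hbd
        rcases hbd with rfl | rfl | rfl | rfl
        · rfl
        · exact absurd heη hmt
        · exact absurd heη hml
        · exact absurd heη hmr
      · rintro rfl; exact ⟨hmb, bdb⟩
    have hmem : ∀ e, e ∈ bdF f → (e ∈ η' ↔ e = tE f) := by
      intro e he
      rw [mem_shuffle_iff k c η f hf e he, hset]
      constructor
      · rintro (⟨hemp, -⟩ | ⟨e₁, hs, rfl⟩)
        · exact absurd hemp (Set.singleton_ne_empty _)
        · rw [← Set.singleton_eq_singleton_iff.mp hs, oppE_bE]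
      · rintro rfl
        exact Or.inr ⟨bE f, rfl, (oppE_bE f).symm⟩
    have h'b : bE f ∉ η' := fun hcon => bE_ne_tE f ((hmem _ bdb).mp hcon)
    have h't : tE f ∈ η' := (hmem _ bdt).mpr rfl
    have h'l : lE f ∉ η' := fun hcon => (tE_ne_lE f) ((hmem _ bdl).mp hcon).symm
    have h'r : rE f ∉ η' := fun hcon => (tE_ne_rE f) ((hmem _ bdr).mp hcon).symm
    simp only [Hcount, Vcount, dInd_one hmb, dInd_zero hmt, dInd_zero hml, dInd_zero hmr,
      dInd_zero h'b, dInd_one h't, dInd_zero h'l, dInd_zero h'r]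
    norm_num
  · exact absurd ⟨hmt, hml⟩ htl
  · exact absurd ⟨hmt, hml⟩ htl
  · exact absurd ⟨hmt, hmr⟩ htr
  · -- {tE} : slides to bE
    have hset : η ∩ bdF f = {tE f} := by
      ext e
      simp only [Set.mem_inter_iff, Set.mem_singleton_iff]
      constructor
      · rintro ⟨heη, hbd⟩
        simp only [bdF, Set.mem_insert_iff, Set.mem_singleton_iff] at hbd
        rcases hbd with rfl | rfl | rfl | rfl
        · exact absurd heη hmb
        · rfl
        · exact absurd heη hml
        · exact absurd heη hmr
      · rintro rfl; exact ⟨hmt, bdt⟩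
    have hmem : ∀ e, e ∈ bdF f → (e ∈ η' ↔ e = bE f) := by
      intro e he
      rw [mem_shuffle_iff k c η f hf e he, hset]
      constructor
      · rintro (⟨hemp, -⟩ | ⟨e₁, hs, rfl⟩)
        · exact absurd hemp (Set.singleton_ne_empty _)
        · rw [← Set.singleton_eq_singleton_iff.mp hs, oppE_tE]
      · rintro rfl
        exact Or.inr ⟨tE f, rfl, (oppE_tE f).symm⟩
    have h'b : bE f ∈ η' := (hmem _ bdb).mpr rfl
    have h't : tE f ∉ η' := fun hcon => bE_ne_tE f ((hmem _ bdt).mp hcon).symm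
    have h'l : lE f ∉ η' := fun hcon => (bE_ne_lE f) ((hmem _ bdl).mp hcon).symm
    have h'r : rE f ∉ η' := fun hcon => (bE_ne_rE f) ((hmem _ bdr).mp hcon).symm
    simp only [Hcount, Vcount, dInd_zero hmb, dInd_one hmt, dInd_zero hml, dInd_zero hmr,
      dInd_one h'b, dInd_zero h't, dInd_zero h'l, dInd_zero h'r]
    norm_num
  · -- {lE, rE} : deletion
    have hmem : ∀ e, e ∈ bdF f → e ∉ η' := by
      intro e he hcon
      rcases (mem_shuffle_iff k c η f hf e he).mp hcon with ⟨hemp, -⟩ | ⟨e₁, hs, -⟩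
      · have h1 : lE f ∈ η ∩ bdF f := ⟨hml, bdl⟩
        rw [hemp] at h1; exact h1
      · have h1 : lE f ∈ η ∩ bdF f := ⟨hml, bdl⟩
        have h2 : rE f ∈ η ∩ bdF f := ⟨hmr, bdr⟩
        rw [hs] at h1 h2
        exact lE_ne_rE f ((Set.mem_singleton_iff.mp h1).trans
          (Set.mem_singleton_iff.mp h2).symm)
    simp only [Hcount, Vcount, dInd_zero hmb, dInd_zero hmt, dInd_one hml, dInd_one hmr,
      dInd_zero (hmem _ bdb), dInd_zero (hmem _ bdt), dInd_zero (hmem _ bdl),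
      dInd_zero (hmem _ bdr)]
    norm_num
  · -- {lE} : slides to rE
    have hset : η ∩ bdF f = {lE f} := by
      ext e
      simp only [Set.mem_inter_iff, Set.mem_singleton_iff]
      constructor
      · rintro ⟨heη, hbd⟩
        simp only [bdF, Set.mem_insert_iff, Set.mem_singleton_iff] at hbd
        rcases hbd with rfl | rfl | rfl | rfl
        · exact absurd heη hmb
        · exact absurd heη hmt
        · rfl
        · exact absurd heη hmr
      · rintro rfl; exact ⟨hml, bdl⟩
    have hmem : ∀ e, e ∈ bdF f → (e ∈ η' ↔ e = rE f) := by
      intro e he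
      rw [mem_shuffle_iff k c η f hf e he, hset]
      constructor
      · rintro (⟨hemp, -⟩ | ⟨e₁, hs, rfl⟩)
        · exact absurd hemp (Set.singleton_ne_empty _)
        · rw [← Set.singleton_eq_singleton_iff.mp hs, oppE_lE]
      · rintro rfl
        exact Or.inr ⟨lE f, rfl, (oppE_lE f).symm⟩
    have h'b : bE f ∉ η' := fun hcon => bE_ne_rE f ((hmem _ bdb).mp hcon)
    have h't : tE f ∉ η' := fun hcon => tE_ne_rE f ((hmem _ bdt).mp hcon)
    have h'l : lE f ∉ η' := fun hcon => lE_ne_rE f ((hmem _ bdl).mp hcon)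
    have h'r : rE f ∈ η' := (hmem _ bdr).mpr rfl
    simp only [Hcount, Vcount, dInd_zero hmb, dInd_zero hmt, dInd_one hml, dInd_zero hmr,
      dInd_zero h'b, dInd_zero h't, dInd_zero h'l, dInd_one h'r]
    norm_num
  · -- {rE} : slides to lE
    have hset : η ∩ bdF f = {rE f} := by
      ext e
      simp only [Set.mem_inter_iff, Set.mem_singleton_iff]
      constructor
      · rintro ⟨heη, hbd⟩
        simp only [bdF, Set.mem_insert_iff, Set.mem_singleton_iff] at hbd
        rcases hbd with rfl | rfl | rfl | rfl
        · exact absurd heη hmb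
        · exact absurd heη hmt
        · exact absurd heη hml
        · rfl
      · rintro rfl; exact ⟨hmr, bdr⟩
    have hmem : ∀ e, e ∈ bdF f → (e ∈ η' ↔ e = lE f) := by
      intro e he
      rw [mem_shuffle_iff k c η f hf e he, hset]
      constructor
      · rintro (⟨hemp, -⟩ | ⟨e₁, hs, rfl⟩)
        · exact absurd hemp (Set.singleton_ne_empty _)
        · rw [← Set.singleton_eq_singleton_iff.mp hs, oppE_rE]
      · rintro rfl
        exact Or.inr ⟨rE f, rfl, (oppE_rE f).symm⟩
    have h'b : bE f ∉ η' := fun hcon => bE_ne_lE f ((hmem _ bdb).mp hcon)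
    have h't : tE f ∉ η' := fun hcon => tE_ne_lE f ((hmem _ bdt).mp hcon)
    have h'l : lE f ∈ η' := (hmem _ bdl).mpr rfl
    have h'r : rE f ∉ η' := fun hcon => lE_ne_rE f ((hmem _ bdr).mp hcon).symm
    simp only [Hcount, Vcount, dInd_zero hmb, dInd_zero hmt, dInd_zero hml, dInd_one hmr,
      dInd_zero h'b, dInd_zero h't, dInd_one h'l, dInd_zero h'r]
    norm_num
  · -- ∅ : creation
    have hset : η ∩ bdF f = ∅ := by
      ext e
      simp only [Set.mem_inter_iff, Set.mem_empty_iff_false, iff_false, not_and]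
      intro heη hbd
      simp only [bdF, Set.mem_insert_iff, Set.mem_singleton_iff] at hbd
      rcases hbd with rfl | rfl | rfl | rfl
      · exact hmb heη
      · exact hmt heη
      · exact hml heη
      · exact hmr heη
    have hmem : ∀ e, e ∈ bdF f →
        (e ∈ η' ↔ (if c f then e = tE f ∨ e = bE f else e = lE f ∨ e = rE f)) := by
      intro e he
      rw [mem_shuffle_iff k c η f hf e he, hset]
      constructor
      · rintro (⟨-, hcond⟩ | ⟨e₁, hs, -⟩)
        · exact hcond
        · exact absurd hs.symm (Set.singleton_ne_empty _)
      · intro hcond; exact Or.inl ⟨rfl, hcond⟩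
    by_cases hcf : c f
    · have h'b : bE f ∈ η' := (hmem _ bdb).mpr (by rw [if_pos hcf]; exact Or.inr rfl)
      have h't : tE f ∈ η' := (hmem _ bdt).mpr (by rw [if_pos hcf]; exact Or.inl rfl)
      have h'l : lE f ∉ η' := by
        intro hcon
        have := (hmem _ bdl).mp hcon
        rw [if_pos hcf] at this
        rcases this with h1 | h1
        · exact tE_ne_lE f h1.symm
        · exact bE_ne_lE f h1.symm
      have h'r : rE f ∉ η' := by
        intro hcon
        have := (hmem _ bdr).mp hcon
        rw [if_pos hcf] at this
        rcases this with h1 | h1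
        · exact tE_ne_rE f h1.symm
        · exact bE_ne_rE f h1.symm
      simp only [Hcount, Vcount, dInd_zero hmb, dInd_zero hmt, dInd_zero hml,
        dInd_zero hmr, dInd_one h'b, dInd_one h't, dInd_zero h'l, dInd_zero h'r]
      norm_num
    · have h'b : bE f ∉ η' := by
        intro hcon
        have := (hmem _ bdb).mp hcon
        rw [if_neg hcf] at this
        rcases this with h1 | h1
        · exact bE_ne_lE f h1
        · exact bE_ne_rE f h1
      have h't : tE f ∉ η' := by
        intro hcon
        have := (hmem _ bdt).mp hcon
        rw [if_neg hcf] at this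
        rcases this with h1 | h1
        · exact tE_ne_lE f h1
        · exact tE_ne_rE f h1
      have h'l : lE f ∈ η' := (hmem _ bdl).mpr (by rw [if_neg hcf]; exact Or.inl rfl)
      have h'r : rE f ∈ η' := (hmem _ bdr).mpr (by rw [if_neg hcf]; exact Or.inr rfl)
      simp only [Hcount, Vcount, dInd_zero hmb, dInd_zero hmt, dInd_zero hml,
        dInd_zero hmr, dInd_zero h'b, dInd_zero h't, dInd_one h'l, dInd_one h'r]
      norm_num
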